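/- Let p be a prime, a ≥ 1, and n = p^a. If c : Fin n → ℤ satisfies c 0 + c 1 + ⋯ + c (n−1) = 1, then the circulant matrix of c is nonsingular, i.e. its determinant is a nonzero integer. -/

import Mathlib

open Matrix Polynomial

section Aux

open Fin.NatCast

variable {K : Type*} [Field K] {n : ℕ} [NeZero n]

private lemma aux_J_pow (k : ℕ) :
    (circulant (Pi.single 1 1 : Fin n → K)) ^ k
      = circulant (Pi.single ((k : Fin n)) 1) := by
  induction k with
  | zero => simp
  | succ k ih =>
    rw [pow_succ, ih, circulant_mul, mulVec_single]
    ext i j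
    simp [circulant_apply, Pi.single_apply, sub_eq_iff_eq_add]

private lemma aux_circulant_eq_aeval (d : Fin n → K) :
    circulant d = aeval (circulant (Pi.single 1 1 : Fin n → K))
      (∑ k : Fin n, C (d k) * X ^ (k : ℕ)) := by
  rw [map_sum]
  have h1 : ∀ k : Fin n,
      aeval (circulant (Pi.single 1 1 : Fin n → K)) (C (d k) * X ^ (k : ℕ))
        = circulant (Pi.single k (d k)) := by
    intro k
    rw [_root_.map_mul, map_pow, aeval_X, aeval_C, aux_J_pow, Fin.cast_val_eq_self,
      ← Algebra.smul_def, ← circulant_smul]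
    have h2 : (d k • (Pi.single k 1 : Fin n → K)) = Pi.single k (d k) := by
      funext i
      rw [Pi.smul_apply, Pi.single_apply, Pi.single_apply]
      split <;> simp
    rw [h2]
  simp_rw [h1]
  conv_lhs => rw [← Finset.univ_sum_single d]
  ext i j
  simp [Matrix.sum_apply, circulant_apply, Finset.sum_apply]

private lemma aux_nilpotent (p a : ℕ) [Fact p.Prime] [CharP K p] (hn : n = p ^ a)
    (d : Fin n → K) (hd : ∑ i, d i = 0) : IsNilpotent (circulant d) := by
  set J : Matrix (Fin n) (Fin n) K := circulant (Pi.single 1 1) with hJ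
  set f : Polynomial K := ∑ k : Fin n, C (d k) * X ^ (k : ℕ) with hf
  have h1 : circulant d = aeval J f := aux_circulant_eq_aeval d
  have hroot : f.IsRoot 1 := by
    simp [hf, IsRoot, eval_finset_sum, hd]
  obtain ⟨q, hq⟩ := dvd_iff_isRoot.mpr hroot
  have hXn : ((X : Polynomial K) - C 1) ^ n = X ^ n - 1 := by
    rw [hn, sub_pow_char_pow]
    simp
  have hJn : J ^ n = 1 := by
    rw [hJ, aux_J_pow]
    simp
  refine ⟨n, ?_⟩
  rw [h1, ← map_pow, hq, mul_pow, hXn, _root_.map_mul]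
  simp [map_sub, map_pow, hJn]

private lemma aux_det_ne_zero (p a : ℕ) [Fact p.Prime] [CharP K p] (hn : n = p ^ a)
    (v : Fin n → K) (hv : ∑ i, v i = 1) : (circulant v).det ≠ 0 := by
  set w : Fin n → K := v - Pi.single 0 1 with hw
  have hd : ∑ i, w i = 0 := by
    simp [hw, Finset.sum_sub_distrib, hv]
  have hns := aux_nilpotent p a hn w hd
  have hunit : IsUnit (circulant v) := by
    have h2 : circulant v = 1 + circulant w := by
      rw [hw, circulant_sub, circulant_single_one]
      abel
    rw [h2]
    exact hns.isUnit_one_add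
  exact ((Matrix.isUnit_iff_isUnit_det _).mp hunit).ne_zero

end Aux

theorem circulant_det_ne_zero (p a : ℕ) (hp : p.Prime) (ha : 1 ≤ a)
    (n : ℕ) (hn : n = p ^ a)
    (c : Fin n → ℤ) (hc : ∑ i, c i = 1) :
    (Matrix.circulant c).det ≠ 0 := by
  haveI : Fact p.Prime := ⟨hp⟩
  haveI : NeZero n := ⟨by rw [hn]; exact pow_ne_zero a hp.pos.ne'⟩
  have key : (Matrix.circulant fun i => ((c i : ZMod p))).det ≠ 0 := by
    refine aux_det_ne_zero p a hn _ ?_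
    have : ((∑ i, c i : ℤ) : ZMod p) = 1 := by rw [hc]; simp
    rw [Int.cast_sum] at this
    exact this
  intro h0
  apply key
  have h1 : ((Int.castRingHom (ZMod p)).mapMatrix (Matrix.circulant c)).det = 0 := by
    rw [← RingHom.map_det, h0, map_zero]
  rw [← h1]
  rfl
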